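/- Let h ≥ 2 and let B_1, B_2, …, B_{h+2} be independent random variables, each uniformly distributed on the integers {0, 1, …, 255}. Conditioning on the event that B_1 fails the matching condition, i.e., B_1 < max{B_2, …, B_{h+1}}, shifts the expectations of B_2 and of max{B_3, …, B_{h+2}} towards higher values: E(B_2 ∣ B_1 < max{B_2, …, B_{h+1}}) ≥ E(B_2) = 255/2, and E(max{B_3, …, B_{h+2}} ∣ B_1 < max{B_2, …, B_{h+1}}) ≥ E(max{B_3, …, B_{h+2}}). -/

import Mathlib

open MeasureTheory ProbabilityTheory
open scoped ENNReal


private lemma cons_mono {n : ℕ} {a a' : Fin 256} {y y' : Fin n → Fin 256}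
    (ha : a ≤ a') (hy : y ≤ y') :
    (Fin.cons (α := fun _ : Fin (n + 1) => Fin 256) a y)
      ≤ Fin.cons (α := fun _ : Fin (n + 1) => Fin 256) a' y' :=
  Fin.cons_le_cons.mpr ⟨ha, hy⟩

private lemma harris : ∀ (n : ℕ) (f g : (Fin n → Fin 256) → ℝ), Monotone f → Monotone g →
    (∑ x, f x) * (∑ x, g x) ≤ (Fintype.card (Fin n → Fin 256) : ℝ) * ∑ x, f x * g x := by
  intro n
  induction n with
  | zero =>
      intro f g _ _
      simp [Fintype.card_fun]
  | succ n ih =>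
      intro f g hf hg
      have key : ∀ (F : (Fin (n + 1) → Fin 256) → ℝ),
          ∑ x, F x = ∑ a : Fin 256, ∑ y : Fin n → Fin 256, F (Fin.cons a y) := by
        intro F
        rw [← Equiv.sum_comp (Fin.consEquiv fun _ => Fin 256) F, Fintype.sum_prod_type]
        rfl
      set F : Fin 256 → ℝ := fun a => ∑ y : Fin n → Fin 256, f (Fin.cons a y) with hF
      set G : Fin 256 → ℝ := fun a => ∑ y : Fin n → Fin 256, g (Fin.cons a y) with hG
      have hFG : ∀ a, F a * G a
          ≤ (Fintype.card (Fin n → Fin 256) : ℝ)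
            * ∑ y : Fin n → Fin 256, f (Fin.cons a y) * g (Fin.cons a y) := fun a =>
        ih _ _ (fun y y' hy => hf (cons_mono le_rfl hy)) (fun y y' hy => hg (cons_mono le_rfl hy))
      have hFmono : Monotone F := fun a a' ha =>
        Finset.sum_le_sum fun y _ => hf (cons_mono ha le_rfl)
      have hGmono : Monotone G := fun a a' ha =>
        Finset.sum_le_sum fun y _ => hg (cons_mono ha le_rfl)
      have hcheb := (hFmono.monovary hGmono).sum_mul_sum_le_card_mul_sum
      calc (∑ x, f x) * (∑ x, g x) = (∑ a, F a) * (∑ a, G a) := by rw [key f, key g]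
        _ ≤ (Fintype.card (Fin 256) : ℝ) * ∑ a, F a * G a := hcheb
        _ ≤ (Fintype.card (Fin 256) : ℝ) * ∑ a, ((Fintype.card (Fin n → Fin 256) : ℝ)
              * ∑ y : Fin n → Fin 256, f (Fin.cons a y) * g (Fin.cons a y)) := by
            refine mul_le_mul_of_nonneg_left (Finset.sum_le_sum fun a _ => hFG a)
              (by positivity)
        _ = (Fintype.card (Fin (n + 1) → Fin 256) : ℝ) * ∑ x, f x * g x := by
            rw [key fun x => f x * g x, ← Finset.mul_sum]
            simp only [Fintype.card_fun, Fintype.card_fin]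
            push_cast
            ring


private lemma harris_flip (n : ℕ) (f : (Fin (n + 1) → Fin 256) → ℝ)
    (A : Set (Fin (n + 1) → Fin 256))
    (hf : Monotone f) (hf0 : ∀ x a, f (Function.update x 0 a) = f x)
    (hA : ∀ x y, x ∈ A → (∀ i, i ≠ 0 → x i ≤ y i) → y 0 ≤ x 0 → y ∈ A) :
    (∑ x, f x) * (∑ x, A.indicator (fun _ => (1 : ℝ)) x)
      ≤ (Fintype.card (Fin (n + 1) → Fin 256) : ℝ)
        * ∑ x, f x * A.indicator (fun _ => (1 : ℝ)) x := by
  classical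
  set σ : (Fin (n + 1) → Fin 256) → (Fin (n + 1) → Fin 256) :=
    fun x => Function.update x 0 (x 0).rev with hσ
  have hσσ : Function.Involutive σ := by
    intro x
    simp only [hσ, Function.update_idem, Function.update_self, Fin.rev_rev,
      Function.update_eq_self]
  have hσbij : Function.Bijective σ := hσσ.bijective
  set g : (Fin (n + 1) → Fin 256) → ℝ := A.indicator (fun _ => (1 : ℝ)) with hg
  have hg' : Monotone fun x => g (σ x) := by
    intro x y hxy
    by_cases hx : σ x ∈ A
    · have hy : σ y ∈ A := by
        refine hA (σ x) (σ y) hx (fun i hi => ?_) ?_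
        · simpa only [hσ, Function.update_of_ne hi] using hxy i
        · simp only [hσ, Function.update_self]
          exact Fin.rev_le_rev.mpr (hxy 0)
      simp [hg, Set.indicator_of_mem, hx, hy]
    · simp only [hg, Set.indicator_of_notMem hx]
      by_cases hy : σ y ∈ A <;> simp [Set.indicator_of_mem, Set.indicator_of_notMem, hy]
  have hfσ : ∀ x, f (σ x) = f x := fun x => hf0 x _
  have h1 := harris (n + 1) f (fun x => g (σ x)) hf hg'
  have e1 : ∑ x, g (σ x) = ∑ x, g x :=
    Fintype.sum_bijective σ hσbij _ _ fun x => rfl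
  have e2 : ∑ x, f x * g (σ x) = ∑ x, f x * g x := by
    have : ∀ x, f x * g (σ x) = (fun z => f z * g z) (σ x) := by
      intro x; simp [hfσ x]
    rw [Finset.sum_congr rfl fun x _ => this x]
    exact Fintype.sum_bijective σ hσbij _ _ fun x => rfl
  rw [e1, e2] at h1
  exact h1
/-- **Conditioning on a failed matching condition shifts expectations upwards.**
Let `h ≥ 2` and let `B₁, …, B_{h+2}` be independent random variables, each uniform on
`{0, …, 255}` (encoded as the family `B : Fin (h+2) → Ω → Fin 256`, with `B 0 = B₁`,
`B 1 = B₂`, `B i.succ.castSucc = B_{i+2}` and `B i.succ.succ = B_{i+3}` for `i : Fin h`;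
so the horizon of `B₁` is `B₂, …, B_{h+1}` and the shifted horizon is `B₃, …, B_{h+2}`).
Conditioning on the event `A = {B₁ < max {B₂, …, B_{h+1}}}` that `B₁` fails the matching
condition shifts expectations towards higher values:
`E(B₂ ∣ A) ≥ E(B₂) = 255/2` and
`E(max {B₃, …, B_{h+2}} ∣ A) ≥ E(max {B₃, …, B_{h+2}})`. -/
theorem ae_cond_fail_shifts_expectation {Ω : Type*} [MeasurableSpace Ω] (μ : Measure Ω)
    [IsProbabilityMeasure μ]
    (h : ℕ) (hh : 2 ≤ h) (B : Fin (h + 2) → Ω → Fin 256)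
    (hmeas : ∀ i, Measurable (B i))
    (hindep : iIndepFun B μ)
    (hunif : ∀ i (k : Fin 256), μ {ω | B i ω = k} = 1 / 256) :
    (∫ ω, ((B 1 ω : ℕ) : ℝ) ∂μ = 255 / 2) ∧
    (∫ ω, ((B 1 ω : ℕ) : ℝ) ∂μ
        ≤ ∫ ω, ((B 1 ω : ℕ) : ℝ)
            ∂μ[|{ω | (B 0 ω : ℕ)
                  < Finset.univ.sup fun i : Fin h => (B i.succ.castSucc ω : ℕ)}]) ∧
    (∫ ω, (((Finset.univ.sup fun i : Fin h => (B i.succ.succ ω : ℕ)) : ℕ) : ℝ) ∂μ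
        ≤ ∫ ω, (((Finset.univ.sup fun i : Fin h => (B i.succ.succ ω : ℕ)) : ℕ) : ℝ)
            ∂μ[|{ω | (B 0 ω : ℕ)
                  < Finset.univ.sup fun i : Fin h => (B i.succ.castSucc ω : ℕ)}]) := by
  classical
  haveI : NeZero h := ⟨by omega⟩
  set T : Ω → (Fin (h + 2) → Fin 256) := fun ω i => B i ω with hTdef
  have hT : Measurable T := measurable_pi_lambda _ hmeas
  set ν : Measure (Fin (h + 2) → Fin 256) := μ.map T with hν
  haveI hνprob : IsProbabilityMeasure ν := Measure.isProbabilityMeasure_map hT.aemeasurable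
  -- point masses of ν
  have hsing : ∀ x : Fin (h + 2) → Fin 256, ν {x} = (1 / 256 : ℝ≥0∞) ^ (h + 2) := by
    intro x
    have hpre : T ⁻¹' {x} = ⋂ i, B i ⁻¹' {x i} := by
      ext ω
      simp [hTdef, funext_iff, Set.mem_iInter]
    rw [hν, Measure.map_apply hT (measurableSet_singleton x), hpre,
      hindep.meas_iInter fun i => ⟨{x i}, measurableSet_singleton _, rfl⟩]
    have hu : ∀ i, μ (B i ⁻¹' {x i}) = 1 / 256 := fun i => hunif i (x i)
    simp [hu]
  set creal : ℝ := ((256 : ℝ))⁻¹ ^ (h + 2) with hcrealdef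
  have hcreal : ∀ x : Fin (h + 2) → Fin 256, (ν {x}).toReal = creal := by
    intro x
    rw [hsing x]
    simp [ENNReal.toReal_pow, hcrealdef]
  have hcreal_pos : 0 < creal := by positivity
  -- the integral of any g ∘ T
  have hintν : ∀ g : (Fin (h + 2) → Fin 256) → ℝ,
      ∫ x, g x ∂ν = creal * ∑ x, g x := by
    intro g
    rw [integral_fintype (Integrable.of_finite)]
    simp only [measureReal_def, hcreal, smul_eq_mul]
    rw [← Finset.mul_sum]
  have hint : ∀ g : (Fin (h + 2) → Fin 256) → ℝ,
      ∫ ω, g (T ω) ∂μ = creal * ∑ x, g x := by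
    intro g
    rw [← integral_map hT.aemeasurable (measurable_of_countable g).aestronglyMeasurable, ← hν]
    exact hintν g
  -- the event
  set A : Set (Fin (h + 2) → Fin 256) :=
    {x | (x 0 : ℕ) < Finset.univ.sup fun i : Fin h => (x i.succ.castSucc : ℕ)} with hAdef
  have hAmeas : MeasurableSet A := (Set.to_countable A).measurableSet
  have hsets : {ω | (B 0 ω : ℕ)
      < Finset.univ.sup fun i : Fin h => (B i.succ.castSucc ω : ℕ)} = T ⁻¹' A := rfl
  set ind : (Fin (h + 2) → Fin 256) → ℝ := A.indicator (fun _ => (1 : ℝ)) with hinddef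
  set P : ℝ := ∑ x, ind x with hPdef
  have hνA : (ν A).toReal = creal * P := by
    rw [← measureReal_def, ← integral_indicator_one hAmeas, hintν]
    rfl
  -- nonemptiness
  have index_ne : ∀ i : Fin h, (i.succ.castSucc : Fin (h + 2)) ≠ 0 :=
    fun i => Fin.ne_of_val_ne (by simp)
  have index_ne' : ∀ i : Fin h, (i.succ.succ : Fin (h + 2)) ≠ 0 :=
    fun i => Fin.ne_of_val_ne (by simp)
  have one_ne : (1 : Fin (h + 2)) ≠ 0 := Fin.ne_of_val_ne (by simp)
  set x₀ : Fin (h + 2) → Fin 256 := fun i => if i = 0 then (0 : Fin 256) else 255 with hx₀def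
  have hx₀ : x₀ ∈ A := by
    simp only [hAdef, Set.mem_setOf_eq, hx₀def, if_pos rfl]
    have hsup : (Finset.univ.sup fun i : Fin h =>
        (((if (i.succ.castSucc : Fin (h + 2)) = 0 then (0 : Fin 256) else 255) : Fin 256) : ℕ))
        = 255 := by
      have : ∀ i : Fin h, (((if (i.succ.castSucc : Fin (h + 2)) = 0 then (0 : Fin 256) else 255)
          : Fin 256) : ℕ) = 255 := by
        intro i
        rw [if_neg (index_ne i)]
        rfl
      rw [Finset.sup_congr rfl fun i _ => this i]
      simpa using Finset.sup_const (Finset.univ_nonempty (α := Fin h)) (255 : ℕ)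
    rw [hsup]
    simp
  have hA0 : ν A ≠ 0 := by
    intro hc
    have h1 : ν {x₀} ≤ ν A := measure_mono (Set.singleton_subset_iff.mpr hx₀)
    rw [hc, hsing x₀] at h1
    simp at h1
  have hP1 : (1 : ℝ) ≤ P := by
    have hnn : ∀ x ∈ Finset.univ, (0 : ℝ) ≤ ind x := fun x _ =>
      Set.indicator_nonneg (fun _ _ => zero_le_one) x
    have := Finset.single_le_sum hnn (Finset.mem_univ x₀)
    rwa [hinddef, Set.indicator_of_mem hx₀] at this
  have hP_pos : 0 < P := lt_of_lt_of_le one_pos hP1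
  -- conditional integral formula
  have hcond : ∀ g : (Fin (h + 2) → Fin 256) → ℝ,
      ∫ ω, g (T ω) ∂μ[|T ⁻¹' A]
        = (creal * P)⁻¹ * (creal * ∑ x, ind x * g x) := by
    intro g
    have h1 : μ[|T ⁻¹' A] = (μ (T ⁻¹' A))⁻¹ • μ.restrict (T ⁻¹' A) := rfl
    have hμs : μ (T ⁻¹' A) = ν A := by
      rw [hν, Measure.map_apply hT hAmeas]
    rw [h1, integral_smul_measure,
      ← setIntegral_map hAmeas (measurable_of_countable g).aestronglyMeasurable hT.aemeasurable,
      ← hν, hμs, integral_fintype (Integrable.of_finite)]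
    simp only [measureReal_def]
    have hpt : ∀ x : Fin (h + 2) → Fin 256,
        ((ν.restrict A) {x}).toReal • g x = creal * (ind x * g x) := by
      intro x
      rw [Measure.restrict_apply (measurableSet_singleton x)]
      by_cases hx : x ∈ A
      · rw [Set.inter_eq_left.mpr (Set.singleton_subset_iff.mpr hx), hcreal x,
          hinddef, Set.indicator_of_mem hx]
        simp [smul_eq_mul]
      · rw [Set.singleton_inter_eq_empty.mpr hx]
        simp [hinddef, Set.indicator_of_notMem hx]
    rw [Finset.sum_congr rfl fun x _ => hpt x, ← Finset.mul_sum, ENNReal.toReal_inv, hνA]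
    simp only [smul_eq_mul]
  -- the upward-shift inequality, given monotonicity data
  have hshift : ∀ g : (Fin (h + 2) → Fin 256) → ℝ, Monotone g →
      (∀ x a, g (Function.update x 0 a) = g x) →
      ∫ ω, g (T ω) ∂μ ≤ ∫ ω, g (T ω) ∂μ[|T ⁻¹' A] := by
    intro g hmono hg0
    rw [hint g, hcond g]
    have hAup : ∀ x y : Fin (h + 2) → Fin 256, x ∈ A → (∀ i, i ≠ 0 → x i ≤ y i) →
        y 0 ≤ x 0 → y ∈ A := by
      intro x y hx hle h0
      simp only [hAdef, Set.mem_setOf_eq] at hx ⊢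
      have h0' : (y 0 : ℕ) ≤ (x 0 : ℕ) := h0
      refine lt_of_le_of_lt h0' (lt_of_lt_of_le hx ?_)
      exact Finset.sup_mono_fun fun i _ => hle _ (index_ne i)
    have harr := harris_flip (h + 1) g A hmono hg0 hAup
    have hNcard : (Fintype.card (Fin (h + 1 + 1) → Fin 256) : ℝ) = creal⁻¹ := by
      rw [Fintype.card_fun, Fintype.card_fin, Fintype.card_fin, hcrealdef, ← inv_pow, inv_inv]
      push_cast
      ring
    rw [hNcard] at harr
    have hcne : creal ≠ 0 := ne_of_gt hcreal_pos
    rw [inv_mul_eq_div, le_div_iff₀ (by positivity : (0 : ℝ) < creal * P)]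
    have hsum_eq : ∑ x, g x * ind x = ∑ x, ind x * g x := by
      exact Finset.sum_congr rfl fun x _ => mul_comm _ _
    calc creal * (∑ x, g x) * (creal * P)
        = creal ^ 2 * ((∑ x, g x) * P) := by ring
      _ ≤ creal ^ 2 * (creal⁻¹ * ∑ x, g x * ind x) := by
          refine mul_le_mul_of_nonneg_left ?_ (by positivity)
          exact harr
      _ = creal * ∑ x, ind x * g x := by
          rw [hsum_eq]
          field_simp
  -- part 1
  haveI : IsProbabilityMeasure (μ.map (B 1)) := Measure.isProbabilityMeasure_map (hmeas 1).aemeasurable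
  have part1 : ∫ ω, ((B 1 ω : ℕ) : ℝ) ∂μ = 255 / 2 := by
    rw [← integral_map (hmeas 1).aemeasurable
      (measurable_of_countable fun k : Fin 256 => ((k : ℕ) : ℝ)).aestronglyMeasurable,
      integral_fintype (Integrable.of_finite)]
    have hu : ∀ k : Fin 256, ((μ.map (B 1)) {k}).toReal = (256 : ℝ)⁻¹ := by
      intro k
      rw [Measure.map_apply (hmeas 1) (measurableSet_singleton k)]
      have : μ (B 1 ⁻¹' {k}) = 1 / 256 := hunif 1 k
      rw [this]
      simp
    simp only [measureReal_def, hu, smul_eq_mul]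
    rw [← Finset.mul_sum]
    have hsum : ∑ k : Fin 256, ((k : ℕ) : ℝ) = 32640 := by
      rw [← Nat.cast_sum]
      norm_num [Fin.sum_univ_eq_sum_range (fun i => i) 256, Finset.sum_range_id]
    rw [hsum]
    norm_num
  refine ⟨part1, ?_, ?_⟩
  · -- part 2
    have hmono : Monotone (fun x : Fin (h + 2) → Fin 256 => ((x 1 : ℕ) : ℝ)) :=
      fun x y hxy => Nat.cast_le.mpr (hxy 1)
    have hg0 : ∀ (x : Fin (h + 2) → Fin 256) a,
        (fun x : Fin (h + 2) → Fin 256 => ((x 1 : ℕ) : ℝ)) (Function.update x 0 a)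
          = ((x 1 : ℕ) : ℝ) := by
      intro x a
      simp only [Function.update_of_ne one_ne]
    rw [hsets]
    exact hshift _ hmono hg0
  · -- part 3
    have hmono : Monotone (fun x : Fin (h + 2) → Fin 256 =>
        (((Finset.univ.sup fun i : Fin h => (x i.succ.succ : ℕ)) : ℕ) : ℝ)) :=
      fun x y hxy => Nat.cast_le.mpr (Finset.sup_mono_fun fun i _ => hxy _)
    have hg0 : ∀ (x : Fin (h + 2) → Fin 256) a,
        (fun x : Fin (h + 2) → Fin 256 =>
          (((Finset.univ.sup fun i : Fin h => (x i.succ.succ : ℕ)) : ℕ) : ℝ))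
            (Function.update x 0 a)
          = (((Finset.univ.sup fun i : Fin h => (x i.succ.succ : ℕ)) : ℕ) : ℝ) := by
      intro x a
      have hfun : (fun i : Fin h => (((Function.update x 0 a) i.succ.succ : Fin 256) : ℕ))
          = fun i : Fin h => ((x i.succ.succ : Fin 256) : ℕ) :=
        funext fun i => by rw [Function.update_of_ne (index_ne' i)]
      simp only [hfun]
    rw [hsets]
    exact hshift _ hmono hg0
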